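/- Let M be a symmetric positive definite real m×m matrix with spectral condition number κ(M) = ‖M‖₂‖M⁻¹‖₂. Then for all vectors x, y ∈ ℝᵐ with ⟨x, y⟩ = 0 (Euclidean inner product), one has |⟨Mx, y⟩| ≤ (1 − 1/κ(M)) · ⟨Mx, x⟩^{1/2} · ⟨My, y⟩^{1/2}. -/
import Mathlib


open Matrix

/-- Scalar core of the strengthened Cauchy–Schwarz inequality. -/
lemma scalar_key {m : ℕ} (hm : 0 < m) (lam : Fin m → ℝ) (hpos : ∀ i, 0 < lam i)
    (u v : Fin m → ℝ) (huv : ∑ i, u i * v i = 0) :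
    |∑ i, lam i * (u i * v i)| ≤
      (1 - (⨅ i, lam i) / (⨆ i, lam i)) * Real.sqrt (∑ i, lam i * (u i * u i)) *
        Real.sqrt (∑ i, lam i * (v i * v i)) := by
  haveI : Nonempty (Fin m) := ⟨⟨0, hm⟩⟩
  set a := ⨅ i, lam i with ha
  set b := ⨆ i, lam i with hb
  have ha_le : ∀ i, a ≤ lam i := fun i => ciInf_le (Finite.bddBelow_range _) i
  have hle_b : ∀ i, lam i ≤ b := fun i => le_ciSup (Finite.bddAbove_range _) i
  obtain ⟨i0, hi0⟩ := Finite.exists_min lam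
  have ha_eq : a = lam i0 := le_antisymm (ha_le i0) (le_ciInf hi0)
  have ha_pos : 0 < a := ha_eq ▸ hpos i0
  have hb_pos : 0 < b := lt_of_lt_of_le ha_pos ((ha_le i0).trans (hle_b i0))
  set c := 1 - a / b with hc
  have hc0 : 0 ≤ c := by
    have h : a / b ≤ 1 := (div_le_one hb_pos).mpr ((ha_le i0).trans (hle_b i0))
    rw [hc]; linarith
  -- termwise bound : lam i - a ≤ c * lam i
  have hterm : ∀ i, lam i - a ≤ c * lam i := by
    intro i
    have h1 : (a / b) * lam i ≤ a := by
      rw [div_mul_eq_mul_div, div_le_iff₀ hb_pos]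
      exact mul_le_mul_of_nonneg_left (hle_b i) ha_pos.le
    rw [hc]
    have h2 : (1 - a / b) * lam i = lam i - (a / b) * lam i := by ring
    linarith
  have hnn : ∀ i, 0 ≤ lam i - a := fun i => sub_nonneg.mpr (ha_le i)
  -- rewrite using lam i - a
  have h1 : ∑ i, lam i * (u i * v i) = ∑ i, (lam i - a) * (u i * v i) := by
    simp_rw [sub_mul]
    rw [Finset.sum_sub_distrib, ← Finset.mul_sum, huv, mul_zero, sub_zero]
  -- Cauchy–Schwarz
  set f : Fin m → ℝ := fun i => Real.sqrt (lam i - a) * u i with hf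
  set g : Fin m → ℝ := fun i => Real.sqrt (lam i - a) * v i with hg
  have hfg : ∀ i, (lam i - a) * (u i * v i) = f i * g i := by
    intro i
    simp only [hf, hg]
    rw [show Real.sqrt (lam i - a) * u i * (Real.sqrt (lam i - a) * v i)
        = (Real.sqrt (lam i - a) * Real.sqrt (lam i - a)) * (u i * v i) by ring,
      Real.mul_self_sqrt (hnn i)]
  have hf2 : ∀ i, f i ^ 2 = (lam i - a) * (u i * u i) := by
    intro i
    simp only [hf]
    rw [mul_pow, Real.sq_sqrt (hnn i)]; ring
  have hg2 : ∀ i, g i ^ 2 = (lam i - a) * (v i * v i) := by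
    intro i
    simp only [hg]
    rw [mul_pow, Real.sq_sqrt (hnn i)]; ring
  have hCS : |∑ i, (lam i - a) * (u i * v i)| ≤
      Real.sqrt (∑ i, (lam i - a) * (u i * u i)) *
        Real.sqrt (∑ i, (lam i - a) * (v i * v i)) := by
    simp_rw [hfg]
    rw [abs_le]
    constructor
    · have h := Real.sum_mul_le_sqrt_mul_sqrt Finset.univ f (fun i => -g i)
      simp only [mul_neg, Finset.sum_neg_distrib, neg_sq] at h
      simp_rw [hf2, hg2] at h ⊢
      linarith
    · have := Real.sum_mul_le_sqrt_mul_sqrt Finset.univ f g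
      simp_rw [hf2, hg2] at this ⊢
      exact this
  -- bound the two sums
  have hsum_u : ∑ i, (lam i - a) * (u i * u i) ≤ c * ∑ i, lam i * (u i * u i) := by
    rw [Finset.mul_sum]
    refine Finset.sum_le_sum fun i _ => ?_
    calc (lam i - a) * (u i * u i) ≤ c * lam i * (u i * u i) :=
          mul_le_mul_of_nonneg_right (hterm i) (mul_self_nonneg _)
      _ = c * (lam i * (u i * u i)) := by ring
  have hsum_v : ∑ i, (lam i - a) * (v i * v i) ≤ c * ∑ i, lam i * (v i * v i) := by
    rw [Finset.mul_sum]
    refine Finset.sum_le_sum fun i _ => ?_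
    calc (lam i - a) * (v i * v i) ≤ c * lam i * (v i * v i) :=
          mul_le_mul_of_nonneg_right (hterm i) (mul_self_nonneg _)
      _ = c * (lam i * (v i * v i)) := by ring
  have hAnn : 0 ≤ ∑ i, lam i * (u i * u i) :=
    Finset.sum_nonneg fun i _ => mul_nonneg (hpos i).le (mul_self_nonneg _)
  have hBnn : 0 ≤ ∑ i, lam i * (v i * v i) :=
    Finset.sum_nonneg fun i _ => mul_nonneg (hpos i).le (mul_self_nonneg _)
  calc |∑ i, lam i * (u i * v i)|
      = |∑ i, (lam i - a) * (u i * v i)| := by rw [h1]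
    _ ≤ Real.sqrt (∑ i, (lam i - a) * (u i * u i)) *
          Real.sqrt (∑ i, (lam i - a) * (v i * v i)) := hCS
    _ ≤ Real.sqrt (c * ∑ i, lam i * (u i * u i)) *
          Real.sqrt (c * ∑ i, lam i * (v i * v i)) :=
        mul_le_mul (Real.sqrt_le_sqrt hsum_u) (Real.sqrt_le_sqrt hsum_v)
          (Real.sqrt_nonneg _) (Real.sqrt_nonneg _)
    _ = c * Real.sqrt (∑ i, lam i * (u i * u i)) *
          Real.sqrt (∑ i, lam i * (v i * v i)) := by
        rw [Real.sqrt_mul hc0, Real.sqrt_mul hc0]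
        rw [show Real.sqrt c * Real.sqrt (∑ i, lam i * (u i * u i)) *
            (Real.sqrt c * Real.sqrt (∑ i, lam i * (v i * v i)))
            = (Real.sqrt c * Real.sqrt c) * Real.sqrt (∑ i, lam i * (u i * u i)) *
              Real.sqrt (∑ i, lam i * (v i * v i)) by ring,
          Real.mul_self_sqrt hc0]

/-- Strengthened Cauchy–Schwarz inequality for a symmetric positive definite
matrix `M`: for Euclidean-orthogonal vectors `x, y`,
`|⟨Mx, y⟩| ≤ (1 - 1/κ(M)) √⟨Mx,x⟩ √⟨My,y⟩`, where `κ(M) = λ_max(M)/λ_min(M)`. -/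
theorem stmt_0 {m : ℕ} (hm : 0 < m) (M : Matrix (Fin m) (Fin m) ℝ)
    (hpd : M.PosDef) (x y : Fin m → ℝ) (hxy : x ⬝ᵥ y = 0) :
    |M.mulVec x ⬝ᵥ y| ≤
      (1 - (⨅ i, hpd.isHermitian.eigenvalues i) / (⨆ i, hpd.isHermitian.eigenvalues i)) *
        Real.sqrt (M.mulVec x ⬝ᵥ x) * Real.sqrt (M.mulVec y ⬝ᵥ y) := by
  have hH := hpd.isHermitian
  set lam := hH.eigenvalues with hlam
  set U : Matrix (Fin m) (Fin m) ℝ :=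
    (Matrix.IsHermitian.eigenvectorUnitary hH : Matrix (Fin m) (Fin m) ℝ) with hU
  have hspec : M = U * diagonal lam * star U := by
    have := hH.spectral_theorem
    simpa using this
  have hUstar : star U * U = 1 := (Matrix.mem_unitaryGroup_iff').mp
    (Matrix.IsHermitian.eigenvectorUnitary hH).2
  have hUstar' : U * star U = 1 := (Matrix.mem_unitaryGroup_iff).mp
    (Matrix.IsHermitian.eigenvectorUnitary hH).2
  set u := (star U).mulVec x with hu
  set v := (star U).mulVec y with hv
  -- key computation: M *ᵥ w ⬝ᵥ z = ∑ λ i * (u_w i * u_z i)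
  have hkey : ∀ w z : Fin m → ℝ,
      M.mulVec w ⬝ᵥ z = ∑ i, lam i * (((star U).mulVec w) i * ((star U).mulVec z) i) := by
    intro w z
    rw [hspec]
    rw [← Matrix.mulVec_mulVec, ← Matrix.mulVec_mulVec]
    have hT : Uᵀ = star U := by
      ext i j
      simp [Matrix.star_eq_conjTranspose, Matrix.conjTranspose_apply]
    have hstep : (U.mulVec (((diagonal lam)).mulVec ((star U).mulVec w))) ⬝ᵥ z
        = (((diagonal lam)).mulVec ((star U).mulVec w)) ⬝ᵥ ((star U).mulVec z) := by
      rw [dotProduct_comm, Matrix.dotProduct_mulVec, ← Matrix.mulVec_transpose, hT,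
        dotProduct_comm]
    rw [hstep]
    simp [dotProduct, Matrix.mulVec_diagonal, mul_assoc]
  -- orthogonality transfers
  have horth : ∑ i, u i * v i = 0 := by
    have : u ⬝ᵥ v = x ⬝ᵥ y := by
      have hT : (star U)ᵀ = U := by
        ext i j
        simp [Matrix.star_eq_conjTranspose, Matrix.conjTranspose_apply]
      rw [hu, hv, Matrix.dotProduct_mulVec, ← Matrix.mulVec_transpose, hT,
        Matrix.mulVec_mulVec, hUstar', Matrix.one_mulVec]
    rw [show ∑ i, u i * v i = u ⬝ᵥ v from rfl, this, hxy]
  have hx := hkey x y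
  have hxx := hkey x x
  have hyy := hkey y y
  rw [hx, hxx, hyy]
  exact scalar_key hm lam (fun i => hpd.eigenvalues_pos i) u v horth
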